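/- Let p > q > 1 be relatively prime integers and write p = m·q + r with 1 ≤ r ≤ q - 1. Let k ≥ 1 be an integer and let T : [0,1) → [0,1) be defined by T(x) = frac((p/q) · frac(k·q·x)). Then the probability measure on [0,1) with density f(x) = (p-r)/p · (1 + (q/(p-r)) · 1_{[0, r/q)}(x)) with respect to Lebesgue measure is T-invariant. -/

import Mathlib

open MeasureTheory
open scoped ENNReal

lemma map_affine_vol (c d : ℝ) (hc : 0 < c) :
    Measure.map (fun x => c * x + d) volume
      = ENNReal.ofReal c⁻¹ • volume := by
  have h : (fun x : ℝ => c * x + d) = (fun y : ℝ => y + d) ∘ (fun x : ℝ => c * x) := rfl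
  rw [h, ← Measure.map_map (measurable_add_const d) (measurable_const_mul c)]
  have h2 : Measure.map (fun x : ℝ => c * x) volume = ENNReal.ofReal |c⁻¹| • volume :=
    Real.map_volume_mul_left hc.ne'
  rw [h2, Measure.map_smul, map_add_right_eq_self volume d, abs_of_pos (inv_pos.2 hc)]

lemma core_fract (c : ℝ) (hc : 0 < c) (j : ℤ) (u v : ℝ)
    (hu : (j : ℝ) ≤ c * u) (hv : c * v ≤ (j : ℝ) + 1) :
    Measure.map (fun x => Int.fract (c * x)) (volume.restrict (Set.Ico u v))
      = ENNReal.ofReal c⁻¹ • volume.restrict (Set.Ico (c * u - j) (c * v - j)) := by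
  have h1 : Measure.map (fun x => Int.fract (c * x)) (volume.restrict (Set.Ico u v))
      = Measure.map (fun x => c * x + (-j : ℝ)) (volume.restrict (Set.Ico u v)) := by
    apply Measure.map_congr
    filter_upwards [self_mem_ae_restrict measurableSet_Ico] with x hx
    obtain ⟨hx1, hx2⟩ := hx
    have hfl : ⌊c * x⌋ = j := by
      rw [Int.floor_eq_iff]
      constructor
      · exact hu.trans (by nlinarith)
      · calc c * x < c * v := by nlinarith
          _ ≤ (j : ℝ) + 1 := hv
    rw [Int.fract, hfl]; ring
  have hpre : (fun x : ℝ => c * x + (-j : ℝ)) ⁻¹' (Set.Ico (c * u - j) (c * v - j))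
      = Set.Ico u v := by
    ext x
    simp only [Set.mem_preimage, Set.mem_Ico, sub_eq_add_neg, add_le_add_iff_right,
      add_lt_add_iff_right, mul_le_mul_iff_right₀ hc, mul_lt_mul_iff_right₀ hc]
  rw [h1, ← hpre, ← Measure.restrict_map (by fun_prop) measurableSet_Ico,
    map_affine_vol c (-j) hc, Measure.restrict_smul]

lemma mapFract_Ico (c : ℝ) (hc : 0 < c) (n : ℕ) :
    Measure.map (fun x => Int.fract (c * x)) (volume.restrict (Set.Ico 0 ((n : ℝ) / c)))
      = (n : ℝ≥0∞) • ENNReal.ofReal c⁻¹ • volume.restrict (Set.Ico (0 : ℝ) 1) := by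
  induction n with
  | zero => simp
  | succ n ih =>
    have hsplit : Set.Ico (0:ℝ) (((n:ℕ)+1 : ℝ)/c)
        = Set.Ico 0 ((n:ℝ)/c) ∪ Set.Ico ((n:ℝ)/c) (((n:ℝ)+1)/c) := by
      rw [Set.Ico_union_Ico_eq_Ico]
      · positivity
      all_goals first | positivity | (gcongr; linarith)
    have hcast : ((n+1 : ℕ) : ℝ) = (n:ℝ) + 1 := by push_cast; ring
    have hmeas : Measurable fun x : ℝ => Int.fract (c * x) :=
      measurable_fract.comp (measurable_const_mul c)
    rw [hcast, hsplit, Measure.restrict_union Set.Ico_disjoint_Ico_same measurableSet_Ico,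
      Measure.map_add _ _ hmeas, ih,
      core_fract c hc (n : ℤ) _ _
        (by rw [mul_div_cancel₀ _ hc.ne']; push_cast; exact le_refl _)
        (by rw [mul_div_cancel₀ _ hc.ne']; push_cast; exact le_refl _)]
    have e1 : c * ((n:ℝ) / c) - ((n:ℤ):ℝ) = 0 := by
      rw [mul_div_cancel₀ _ hc.ne']; push_cast; ring
    have e2 : c * (((n:ℝ)+1) / c) - ((n:ℤ):ℝ) = 1 := by
      rw [mul_div_cancel₀ _ hc.ne']; push_cast; ring
    rw [e1, e2, Nat.cast_succ, add_smul, one_smul]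

set_option maxHeartbeats 1000000 in
theorem stmt_4 (p q m r : ℤ) (hq : 1 < q) (hpq : q < p) (hcop : IsCoprime p q)
    (hdiv : p = m * q + r) (hr : 1 ≤ r) (hr' : r ≤ q - 1)
    (k : ℤ) (hk : 1 ≤ k)
    (T : ℝ → ℝ)
    (hT : ∀ x, T x = Int.fract (((p : ℝ) / (q : ℝ)) * Int.fract ((k : ℝ) * (q : ℝ) * x)))
    (f : ℝ → ℝ≥0∞)
    (hf : ∀ x, f x = ENNReal.ofReal
      (((p : ℝ) - r) / p *
        (1 + ((q : ℝ) / ((p : ℝ) - r)) *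
          Set.indicator (Set.Ico (0 : ℝ) ((r : ℝ) / q)) (fun _ => (1 : ℝ)) x)))
    (A : Set ℝ) (hA : MeasurableSet A) (hA1 : A ⊆ Set.Ico (0 : ℝ) 1) :
    ((volume.restrict (Set.Ico (0 : ℝ) 1)).withDensity f) (T ⁻¹' A)
      = ((volume.restrict (Set.Ico (0 : ℝ) 1)).withDensity f) A := by
  -- basic positivity facts
  have hqR : (1 : ℝ) < (q : ℝ) := by exact_mod_cast hq
  have hq0 : (0 : ℝ) < q := by linarith
  have hp0 : (0 : ℝ) < p := by
    have : (1:ℤ) < p := hq.trans hpq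
    exact_mod_cast this.trans_le' (by norm_num)
  have hk0 : (0 : ℝ) < k := by exact_mod_cast hk.trans_lt' (by norm_num)
  have hrR : (1 : ℝ) ≤ (r : ℝ) := by exact_mod_cast hr
  have hrq : (r : ℝ) ≤ (q : ℝ) - 1 := by exact_mod_cast hr'
  have hpqR : (q : ℝ) < p := by exact_mod_cast hpq
  have hdivR : (p : ℝ) = m * q + r := by exact_mod_cast hdiv
  have hm1 : (1 : ℤ) ≤ m := by nlinarith
  have hmR : (1 : ℝ) ≤ (m : ℝ) := by exact_mod_cast hm1
  have hprpos : (0 : ℝ) < (p : ℝ) - r := by linarith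
  have hrq1 : (r : ℝ) / q < 1 := by rw [div_lt_one hq0]; linarith
  set ck : ℝ := (k : ℝ) * (q : ℝ) with hckdef
  set cp : ℝ := (p : ℝ) / (q : ℝ) with hcpdef
  have hck0 : 0 < ck := by positivity
  have hcp0 : 0 < cp := by positivity
  set c1 : ℝ≥0∞ := ENNReal.ofReal (((p:ℝ) - r) / p) with hc1def
  set c2 : ℝ≥0∞ := ENNReal.ofReal ((q:ℝ) / p) with hc2def
  set I : Set ℝ := Set.Ico (0:ℝ) 1 with hIdef
  set J : Set ℝ := Set.Ico (0:ℝ) ((r:ℝ)/q) with hJdef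
  have hJI : J ⊆ I := Set.Ico_subset_Ico_right hrq1.le
  -- rewrite the density as constant plus indicator
  have hfd : f = (fun _ => c1) + J.indicator (fun _ => c2) := by
    funext x
    rw [hf]
    simp only [Pi.add_apply]
    by_cases hx : x ∈ J
    · rw [Set.indicator_of_mem hx, Set.indicator_of_mem hx]
      have hre : ((p:ℝ) - r) / p * (1 + (q:ℝ) / ((p:ℝ) - r) * 1)
          = ((p:ℝ) - r) / p + (q:ℝ) / p := by
        field_simp
      rw [hre, ENNReal.ofReal_add (by positivity) (by positivity)]
    · rw [Set.indicator_of_notMem hx, Set.indicator_of_notMem hx]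
      simp [hc1def]
  -- the measure as combination of restrictions
  have hmu : (volume.restrict I).withDensity f
      = c1 • volume.restrict I + c2 • volume.restrict J := by
    rw [hfd, withDensity_add_left measurable_const, withDensity_const,
      withDensity_indicator measurableSet_Ico, withDensity_const,
      Measure.restrict_restrict measurableSet_Ico,
      Set.inter_eq_self_of_subset_left hJI]
  have hmRmeas : Measurable fun x : ℝ => Int.fract (ck * x) :=
    measurable_fract.comp (measurable_const_mul ck)
  have hmSmeas : Measurable fun x : ℝ => Int.fract (cp * x) :=
    measurable_fract.comp (measurable_const_mul cp)
  -- map R of restrict I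
  have hnI : (((k*q).toNat : ℕ) : ℝ) = ck := by
    have h0 := Int.toNat_of_nonneg (show (0:ℤ) ≤ k * q by positivity)
    rw [hckdef]
    exact_mod_cast h0
  have mapRI : Measure.map (fun x => Int.fract (ck * x)) (volume.restrict I)
      = volume.restrict I := by
    have h1 : I = Set.Ico (0:ℝ) ((((k*q).toNat : ℕ) : ℝ) / ck) := by
      rw [hnI, div_self hck0.ne']
    conv_lhs => rw [h1]
    rw [mapFract_Ico ck hck0, smul_smul, ← hIdef]
    have : (((k*q).toNat : ℕ) : ℝ≥0∞) * ENNReal.ofReal ck⁻¹ = 1 := by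
      rw [← ENNReal.ofReal_natCast, hnI, ← ENNReal.ofReal_mul hck0.le,
        mul_inv_cancel₀ hck0.ne', ENNReal.ofReal_one]
    rw [this, one_smul]
  -- map R of restrict J
  have hnJ : (((k*r).toNat : ℕ) : ℝ) = (k:ℝ) * r := by
    have h0 := Int.toNat_of_nonneg (show (0:ℤ) ≤ k * r by positivity)
    exact_mod_cast h0
  have mapRJ : Measure.map (fun x => Int.fract (ck * x)) (volume.restrict J)
      = ENNReal.ofReal ((r:ℝ)/q) • volume.restrict I := by
    have h1 : J = Set.Ico (0:ℝ) ((((k*r).toNat : ℕ) : ℝ) / ck) := by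
      rw [hnJ, hckdef, hJdef]
      congr 1
      rw [mul_div_mul_left _ _ hk0.ne']
    conv_lhs => rw [h1]
    rw [mapFract_Ico ck hck0, smul_smul, ← hIdef]
    congr 1
    rw [← ENNReal.ofReal_natCast, hnJ, ← ENNReal.ofReal_mul (by positivity)]
    congr 1
    rw [hckdef]
    field_simp
  -- map R μ = restrict I
  have mapRmu : Measure.map (fun x => Int.fract (ck * x))
      ((volume.restrict I).withDensity f) = volume.restrict I := by
    rw [hmu, Measure.map_add _ _ hmRmeas, Measure.map_smul, Measure.map_smul,
      mapRI, mapRJ, smul_smul, ← add_smul]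
    have : c1 + c2 * ENNReal.ofReal ((r:ℝ)/q) = 1 := by
      rw [hc1def, hc2def, ← ENNReal.ofReal_mul (by positivity),
        ← ENNReal.ofReal_add (by positivity) (by positivity)]
      rw [show ((p:ℝ) - r)/p + (q:ℝ)/p * ((r:ℝ)/q) = 1 by field_simp; ring]
      exact ENNReal.ofReal_one
    rw [this, one_smul]
  -- map S of restrict I
  have hmn : ((m.toNat : ℕ) : ℝ) = (m : ℝ) := by
    have h0 := Int.toNat_of_nonneg (show (0:ℤ) ≤ m by linarith)
    exact_mod_cast h0
  have hmcp : ((m.toNat : ℕ) : ℝ) / cp = (m:ℝ) * q / p := by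
    rw [hmn, hcpdef]; field_simp
  have mapSI : Measure.map (fun x => Int.fract (cp * x)) (volume.restrict I)
      = c1 • volume.restrict I + c2 • volume.restrict J := by
    have hmq1 : (m:ℝ) * q / p < 1 := by
      rw [div_lt_one hp0]; nlinarith
    have hsplit : I = Set.Ico (0:ℝ) (((m.toNat : ℕ) : ℝ) / cp)
        ∪ Set.Ico (((m.toNat : ℕ) : ℝ) / cp) 1 := by
      rw [Set.Ico_union_Ico_eq_Ico]
      · rw [hmcp]; positivity
      · rw [hmcp]; exact hmq1.le
    have e1 : cp * (((m.toNat : ℕ) : ℝ) / cp) - ((m:ℤ):ℝ) = 0 := by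
      rw [mul_div_cancel₀ _ hcp0.ne', hmn]; ring
    have e2 : cp * 1 - ((m:ℤ):ℝ) = (r:ℝ)/q := by
      rw [hcpdef, hdivR]; field_simp; ring
    have hu : ((m:ℤ):ℝ) ≤ cp * (((m.toNat : ℕ) : ℝ) / cp) := by
      rw [mul_div_cancel₀ _ hcp0.ne', hmn]
    have hv : cp * 1 ≤ ((m:ℤ):ℝ) + 1 := by
      rw [mul_one, hcpdef]
      rw [div_le_iff₀ hq0, hdivR]
      nlinarith
    conv_lhs => rw [hsplit, Measure.restrict_union Set.Ico_disjoint_Ico_same measurableSet_Ico]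
    rw [Measure.map_add _ _ hmSmeas, mapFract_Ico cp hcp0,
      core_fract cp hcp0 m _ _ hu hv, e1, e2, smul_smul, ← hIdef, ← hJdef]
    congr 2
    · rw [← ENNReal.ofReal_natCast, hmn, ← ENNReal.ofReal_mul (by linarith), hc1def]
      congr 1
      rw [hcpdef]
      field_simp
      nlinarith [hdivR]
    · rw [hc2def, hcpdef]
      congr 1
      field_simp
  -- assemble
  have hTc : T = (fun x => Int.fract (cp * x)) ∘ (fun x => Int.fract (ck * x)) := by
    funext x
    rw [hT]
    simp only [Function.comp_apply, hckdef, hcpdef, mul_assoc]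
  have hmT : Measurable T := by rw [hTc]; exact hmSmeas.comp hmRmeas
  have key : Measure.map T ((volume.restrict I).withDensity f)
      = (volume.restrict I).withDensity f := by
    rw [hTc, ← Measure.map_map hmSmeas hmRmeas, mapRmu, mapSI, hmu]
  rw [← Measure.map_apply hmT hA, key]
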